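/- arXiv:1208.2577 — 3 statements merged into one kernel-verified Lean document; each statement's English description precedes it below -/
import Mathlib

section
/- For all complex z with |Re z| < π/2 we have |tan z| ≤ max(1, tan|Re z|); more precisely, if |Re z| ≤ π/4 then |tan z| ≤ 1, and if π/4 ≤ |Re z| < π/2 then |tan z| ≤ tan|Re z| < 1/(π/2 - |Re z|). -/
lemma norm_sin_sq (z : ℂ) :
    ‖Complex.sin z‖ ^ 2 = Real.sin z.re ^ 2 + Real.sinh z.im ^ 2 := by
  rw [Complex.sin_eq]
  have h : Complex.sin z.re * Complex.cosh z.im + Complex.cos z.re * Complex.sinh z.im * Complex.I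
      = Complex.ofReal (Real.sin z.re * Real.cosh z.im)
        + Complex.ofReal (Real.cos z.re * Real.sinh z.im) * Complex.I := by
    push_cast; ring
  rw [h, Complex.sq_norm, Complex.normSq_add_mul_I]
  nlinarith [Real.sin_sq_add_cos_sq z.re, Real.cosh_sq z.im]

lemma norm_cos_sq (z : ℂ) :
    ‖Complex.cos z‖ ^ 2 = Real.cos z.re ^ 2 + Real.sinh z.im ^ 2 := by
  rw [Complex.cos_eq]
  have h : Complex.cos z.re * Complex.cosh z.im - Complex.sin z.re * Complex.sinh z.im * Complex.I
      = Complex.ofReal (Real.cos z.re * Real.cosh z.im)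
        + Complex.ofReal (-(Real.sin z.re * Real.sinh z.im)) * Complex.I := by
    push_cast; ring
  rw [h, Complex.sq_norm, Complex.normSq_add_mul_I]
  nlinarith [Real.sin_sq_add_cos_sq z.re, Real.cosh_sq z.im]

/-- For complex `z` with `|Re z| < π/2` we have `|tan z| ≤ max(1, tan |Re z|)`;
more precisely, if `|Re z| ≤ π/4` then `|tan z| ≤ 1`, and if `π/4 ≤ |Re z| < π/2`
then `|tan z| ≤ tan |Re z| < 1/(π/2 - |Re z|)`. -/
theorem stmt3 (z : ℂ) (h : |z.re| < Real.pi / 2) :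
    ‖Complex.tan z‖ ≤ max 1 (Real.tan |z.re|) ∧
    (|z.re| ≤ Real.pi / 4 → ‖Complex.tan z‖ ≤ 1) ∧
    (Real.pi / 4 ≤ |z.re| →
      ‖Complex.tan z‖ ≤ Real.tan |z.re| ∧
      Real.tan |z.re| < 1 / (Real.pi / 2 - |z.re|)) := by
  have habs := abs_nonneg z.re
  have hd : (0:ℝ) ≤ Real.sinh z.im ^ 2 := sq_nonneg _
  have hcos : 0 < Real.cos z.re := by
    apply Real.cos_pos_of_mem_Ioo
    constructor <;> [linarith [neg_abs_le z.re]; linarith [le_abs_self z.re]]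
  have hden : 0 < Real.cos z.re ^ 2 + Real.sinh z.im ^ 2 := by positivity
  have htan : ‖Complex.tan z‖ ^ 2
      = (Real.sin z.re ^ 2 + Real.sinh z.im ^ 2) / (Real.cos z.re ^ 2 + Real.sinh z.im ^ 2) := by
    rw [Complex.tan_eq_sin_div_cos, norm_div, div_pow, norm_sin_sq, norm_cos_sq]
  have hnn := norm_nonneg (Complex.tan z)
  -- part for |re| ≤ π/4
  have part1 : |z.re| ≤ Real.pi / 4 → ‖Complex.tan z‖ ≤ 1 := by
    intro h4
    have hc2 : 0 ≤ Real.cos (2 * z.re) := by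
      apply Real.cos_nonneg_of_neg_pi_div_two_le_of_le
      · linarith [neg_abs_le z.re]
      · linarith [le_abs_self z.re]
    have hcs : Real.sin z.re ^ 2 ≤ Real.cos z.re ^ 2 := by
      have := Real.cos_two_mul z.re
      nlinarith [Real.sin_sq_add_cos_sq z.re]
    have hsq : ‖Complex.tan z‖ ^ 2 ≤ 1 := by
      rw [htan, div_le_one hden]; linarith
    nlinarith
  -- part for π/4 ≤ |re|
  have part2 : Real.pi / 4 ≤ |z.re| →
      ‖Complex.tan z‖ ≤ Real.tan |z.re| ∧
      Real.tan |z.re| < 1 / (Real.pi / 2 - |z.re|) := by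
    intro h4
    have hpi := Real.pi_pos
    have habspos : 0 < |z.re| := by linarith
    have htpos : 0 < Real.tan |z.re| := Real.tan_pos_of_pos_of_lt_pi_div_two habspos h
    have hcosa : Real.cos |z.re| = Real.cos z.re := by
      rcases abs_cases z.re with ⟨he, _⟩ | ⟨he, _⟩ <;> rw [he] <;> simp [Real.cos_neg]
    have hsina : Real.sin |z.re| ^ 2 = Real.sin z.re ^ 2 := by
      rcases abs_cases z.re with ⟨he, _⟩ | ⟨he, _⟩ <;> rw [he] <;> simp [Real.sin_neg]
    have hcs : Real.cos z.re ^ 2 ≤ Real.sin z.re ^ 2 := by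
      have hc2 : Real.cos (2 * |z.re|) ≤ 0 := by
        apply Real.cos_nonpos_of_pi_div_two_le_of_le <;> linarith
      have h2m := Real.cos_two_mul |z.re|
      nlinarith [Real.sin_sq_add_cos_sq |z.re|]
    have htansq : Real.tan |z.re| ^ 2 = Real.sin z.re ^ 2 / Real.cos z.re ^ 2 := by
      rw [Real.tan_eq_sin_div_cos, div_pow, hsina, hcosa]
    have hcos2 : 0 < Real.cos z.re ^ 2 := by positivity
    have hsq : ‖Complex.tan z‖ ^ 2 ≤ Real.tan |z.re| ^ 2 := by
      rw [htan, htansq, div_le_div_iff₀ hden hcos2]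
      nlinarith
    constructor
    · nlinarith
    · -- tan |re| = 1 / tan (π/2 - |re|) < 1 / (π/2 - |re|)
      set y := Real.pi / 2 - |z.re| with hy
      have hy0 : 0 < y := by simp only [hy]; linarith
      have hy2 : y < Real.pi / 2 := by simp only [hy]; linarith
      have hlt : y < Real.tan y := Real.lt_tan hy0 hy2
      have heq : Real.tan |z.re| = (Real.tan y)⁻¹ := by
        rw [← Real.tan_pi_div_two_sub]; congr 1; simp only [hy]; ring
      rw [heq, one_div]
      exact inv_strictAnti₀ hy0 hlt
  refine ⟨?_, part1, part2⟩
  rcases le_or_gt |z.re| (Real.pi / 4) with h4 | h4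
  · exact le_max_of_le_left (part1 h4)
  · exact le_max_of_le_right (part2 h4.le).1
end

section
/- Let g : Ω → ℂ be holomorphic on a domain Ω ⊂ ℂ with a repelling fixed point ζ₀ (g(ζ₀) = ζ₀, |g′(ζ₀)| > 1). Then there is a disk Δ ∋ ζ₀ with closure(Δ) ⊂ g(Δ) and g injective on Δ; moreover, if g_j → g uniformly on a neighborhood of closure(Δ), then for all large j, g_j has a fixed point ζ_j ∈ Δ with |g_j′(ζ_j)| > 1, and ζ_j → ζ₀. -/
open Filter Topology Metric

/-- A function with a strict derivative of small norm is locally Lipschitz with any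
larger constant. -/
lemma stmt13_aux_lipschitz {f : ℂ → ℂ} {f' x : ℂ} (h : HasStrictDerivAt f f' x)
    {K : NNReal} (hK : ‖f'‖₊ < K) : ∃ s ∈ 𝓝 x, LipschitzOnWith K f s := by
  have h' : HasStrictFDerivAt f (ContinuousLinearMap.smulRight (1 : ℂ →L[ℂ] ℂ) f') x := h
  apply h'.exists_lipschitzOnWith_of_nnnorm_lt
  simpa [ContinuousLinearMap.nnnorm_smulRight_apply, ContinuousLinearMap.one_def,
    ContinuousLinearMap.nnnorm_id] using hK

set_option maxHeartbeats 1000000 in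
/-- Persistence of repelling fixed points: if `g` has a repelling fixed point `ζ₀`,
there is a disk `Δ ∋ ζ₀` with `closure Δ ⊆ g(Δ)` and `g` injective on `Δ`;
moreover any sequence of holomorphic maps converging uniformly to `g` on
`closure Δ` eventually has a repelling fixed point `ζ_j ∈ Δ` with `ζ_j → ζ₀`. -/
theorem stmt13 (Ω : Set ℂ) (hΩ : IsOpen Ω) (g : ℂ → ℂ)
    (hg : DifferentiableOn ℂ g Ω)
    (ζ₀ : ℂ) (hζ₀ : ζ₀ ∈ Ω) (hfix : g ζ₀ = ζ₀) (hrep : 1 < ‖deriv g ζ₀‖) :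
    ∃ δ > (0 : ℝ), closure (Metric.ball ζ₀ δ) ⊆ Ω ∧
      closure (Metric.ball ζ₀ δ) ⊆ g '' (Metric.ball ζ₀ δ) ∧
      Set.InjOn g (Metric.ball ζ₀ δ) ∧
      ∀ gs : ℕ → ℂ → ℂ, (∀ j, DifferentiableOn ℂ (gs j) Ω) →
        TendstoUniformlyOn gs g Filter.atTop (closure (Metric.ball ζ₀ δ)) →
        ∃ (ζ : ℕ → ℂ) (J : ℕ),
          (∀ j, J ≤ j → ζ j ∈ Metric.ball ζ₀ δ ∧ gs j (ζ j) = ζ j ∧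
            1 < ‖deriv (gs j) (ζ j)‖) ∧
          Filter.Tendsto ζ Filter.atTop (𝓝 ζ₀) := by
  classical
  set d := deriv g ζ₀ with hd_def
  have hd0 : d ≠ 0 := by
    intro h; rw [h] at hrep; simp at hrep; linarith
  have ha : AnalyticAt ℂ g ζ₀ := hg.analyticAt (hΩ.mem_nhds hζ₀)
  obtain ⟨p, hp⟩ := ha
  have hsd : HasStrictDerivAt g d ζ₀ := by
    have h0 := hp.hasStrictDerivAt
    have h1 : (p 1 fun _ => 1) = d := h0.hasDerivAt.deriv.symm
    rwa [h1] at h0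
  -- the norm of the inverse derivative
  have hdinv : ‖d⁻¹‖ < 1 := by
    rw [norm_inv]
    rw [inv_lt_one_iff₀]
    right; exact hrep
  set Kr : ℝ := (‖d⁻¹‖ + 1) / 2 with hKr_def
  have hK0 : 0 < Kr := by positivity
  have hK1 : Kr < 1 := by simp only [hKr_def]; linarith
  have hKd : ‖d⁻¹‖ < Kr := by simp only [hKr_def]; linarith
  set K : NNReal := ⟨Kr, hK0.le⟩ with hK_def
  have hKcoe : (K : ℝ) = Kr := rfl
  -- the local inverse of `g` near `ζ₀`
  set e := (hsd.hasStrictFDerivAt_equiv hd0).toOpenPartialHomeomorph g with he_def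
  have heg : ⇑e = g := (hsd.hasStrictFDerivAt_equiv hd0).toOpenPartialHomeomorph_coe
  have hsrc : ζ₀ ∈ e.source :=
    (hsd.hasStrictFDerivAt_equiv hd0).mem_toOpenPartialHomeomorph_source
  have htgt0 : ζ₀ ∈ e.target := by
    have := (hsd.hasStrictFDerivAt_equiv hd0).image_mem_toOpenPartialHomeomorph_target
    rwa [hfix] at this
  have heζ₀ : e ζ₀ = ζ₀ := by rw [heg]; exact hfix
  have hsymmζ₀ : e.symm ζ₀ = ζ₀ := by
    conv_lhs => rw [← heζ₀]
    exact e.left_inv hsrc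
  -- strict derivative of the inverse
  have hsymm : HasStrictDerivAt (⇑e.symm) d⁻¹ ζ₀ := by
    have h2 := hsd.to_localInverse hd0
    rwa [hfix] at h2
  -- Lipschitz bound for the inverse
  obtain ⟨s, hs_nhds, hlip⟩ := stmt13_aux_lipschitz hsymm
    (K := K) (by rw [← NNReal.coe_lt_coe, coe_nnnorm, hKcoe]; exact hKd)
  -- lower bound for `‖deriv g‖` near `ζ₀`
  set c : ℝ := (1 + ‖d‖) / 2 with hc_def
  have hc1 : 1 < c := by simp only [hc_def]; linarith
  have hcd : c < ‖d‖ := by simp only [hc_def]; linarith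
  have hcont : ContinuousAt (fun z => ‖deriv g z‖) ζ₀ :=
    (((hg.analyticOnNhd hΩ).deriv ζ₀ hζ₀).continuousAt).norm
  have hUev : ∀ᶠ z in 𝓝 ζ₀, c < ‖deriv g z‖ := by
    have := hcont (Ioi_mem_nhds hcd)
    exact this
  -- the neighborhood with all desired properties
  have hN : {z | z ∈ Ω ∧ z ∈ e.source ∧ z ∈ e.target ∧ z ∈ s ∧ c < ‖deriv g z‖} ∈ 𝓝 ζ₀ := by
    filter_upwards [hΩ.mem_nhds hζ₀, e.open_source.mem_nhds hsrc,
      e.open_target.mem_nhds htgt0, hs_nhds, hUev] with z h1 h2 h3 h4 h5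
    exact ⟨h1, h2, h3, h4, h5⟩
  obtain ⟨δ, hδ, hδN⟩ := (Metric.nhds_basis_closedBall).mem_iff.mp hN
  have hcl : closure (Metric.ball ζ₀ δ) = Metric.closedBall ζ₀ δ := closure_ball ζ₀ hδ.ne'
  have hNprop : ∀ z ∈ Metric.closedBall ζ₀ δ,
      z ∈ Ω ∧ z ∈ e.source ∧ z ∈ e.target ∧ z ∈ s ∧ c < ‖deriv g z‖ := fun z hz => hδN hz
  have hζ₀δ : ζ₀ ∈ Metric.closedBall ζ₀ δ := Metric.mem_closedBall_self hδ.le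
  have hζ₀s : ζ₀ ∈ s := (hNprop ζ₀ hζ₀δ).2.2.2.1
  refine ⟨δ, hδ, ?_, ?_, ?_, ?_⟩
  · rw [hcl]; exact fun z hz => (hNprop z hz).1
  · -- surjectivity onto the closed ball
    rw [hcl]
    intro z hz
    have hzt : z ∈ e.target := (hNprop z hz).2.2.1
    have hzs : z ∈ s := (hNprop z hz).2.2.2.1
    have hmem : e.symm z ∈ Metric.ball ζ₀ δ := by
      have h1 : dist (e.symm z) (e.symm ζ₀) ≤ Kr * dist z ζ₀ := hlip.dist_le_mul z hzs ζ₀ hζ₀s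
      rw [hsymmζ₀] at h1
      rw [Metric.mem_ball]
      calc dist (e.symm z) ζ₀ ≤ Kr * dist z ζ₀ := h1
        _ ≤ Kr * δ := by
            exact mul_le_mul_of_nonneg_left (Metric.mem_closedBall.mp hz) hK0.le
        _ < 1 * δ := by exact mul_lt_mul_of_pos_right hK1 hδ
        _ = δ := one_mul δ
    exact ⟨e.symm z, hmem, by rw [← heg]; exact e.right_inv hzt⟩
  · -- injectivity
    intro a ha b hb hab
    have ha' : a ∈ e.source := (hNprop a (Metric.ball_subset_closedBall ha)).2.1
    have hb' : b ∈ e.source := (hNprop b (Metric.ball_subset_closedBall hb)).2.1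
    exact e.injOn ha' hb' (by rw [heg]; exact hab)
  · -- the perturbation statement
    intro gs hdiffs huc
    have hucc : TendstoUniformlyOn gs g atTop (Metric.closedBall ζ₀ δ) := by rwa [hcl] at huc
    set δ' : ℝ := δ / 2 with hδ'_def
    have hδ' : 0 < δ' := by positivity
    have hδ'δ : δ' < δ := by simp only [hδ'_def]; linarith
    have hsub1 : Metric.closedBall ζ₀ δ' ⊆ Metric.ball ζ₀ δ :=
      Metric.closedBall_subset_ball hδ'δ
    have hsub2 : Metric.closedBall ζ₀ δ' ⊆ Metric.closedBall ζ₀ δ :=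
      Metric.closedBall_subset_closedBall hδ'δ.le
    -- uniform convergence of derivatives on the smaller closed ball
    have hderU : TendstoUniformlyOn (deriv ∘ gs) (deriv g) atTop (Metric.closedBall ζ₀ δ') := by
      have hTLU : TendstoLocallyUniformlyOn gs g atTop (Metric.ball ζ₀ δ) :=
        (hucc.mono Metric.ball_subset_closedBall).tendstoLocallyUniformlyOn
      have hballΩ : Metric.ball ζ₀ δ ⊆ Ω := fun z hz =>
        (hNprop z (Metric.ball_subset_closedBall hz)).1
      have hder := hTLU.deriv (Filter.Eventually.of_forall fun j => (hdiffs j).mono hballΩ)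
        Metric.isOpen_ball
      exact (tendstoLocallyUniformlyOn_iff_forall_isCompact Metric.isOpen_ball).mp hder
        _ hsub1 (isCompact_closedBall ζ₀ δ')
    -- constants for the contraction argument
    set η : ℝ := min (δ / 4) (δ' * (1 - Kr) / (2 * Kr)) with hη_def
    have hη : 0 < η := by
      apply lt_min (by positivity)
      have : 0 < 1 - Kr := by linarith
      positivity
    set η₂ : ℝ := (1 - Kr) / (2 * Kr) with hη₂_def
    have hη₂ : 0 < η₂ := by
      have : 0 < 1 - Kr := by linarith
      positivity
    set η₃ : ℝ := min η₂ ((c - 1) / 2) with hη₃_def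
    have hη₃ : 0 < η₃ := lt_min hη₂ (by linarith)
    set k : ℝ := (1 + Kr) / 2 with hk_def
    have hk1 : k < 1 := by simp only [hk_def]; linarith
    have hk0 : 0 ≤ k := by positivity
    set K' : NNReal := ⟨k, hk0⟩ with hK'_def
    -- good events
    obtain ⟨J, hJ⟩ : ∃ J : ℕ, ∀ j, J ≤ j →
        (∀ z ∈ Metric.closedBall ζ₀ δ, ‖g z - gs j z‖ < η) ∧
        (∀ z ∈ Metric.closedBall ζ₀ δ', ‖deriv g z - deriv (gs j) z‖ < η₃) := by
      have hE1 := Metric.tendstoUniformlyOn_iff.mp hucc η hη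
      have hE2 := Metric.tendstoUniformlyOn_iff.mp hderU η₃ hη₃
      rw [eventually_atTop] at hE1 hE2
      obtain ⟨J1, h1⟩ := hE1
      obtain ⟨J2, h2⟩ := hE2
      refine ⟨max J1 J2, fun j hj => ⟨fun z hz => ?_, fun z hz => ?_⟩⟩
      · have := h1 j (le_trans (le_max_left _ _) hj) z hz
        rwa [dist_eq_norm] at this
      · have := h2 j (le_trans (le_max_right _ _) hj) z hz
        rwa [dist_eq_norm, Function.comp_apply] at this
    -- basic estimate: the shifted point stays in the big closed ball
    have hA : ∀ j, J ≤ j → ∀ z ∈ Metric.closedBall ζ₀ δ',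
        z + (g z - gs j z) ∈ Metric.closedBall ζ₀ δ := by
      intro j hj z hz
      have herr := (hJ j hj).1 z (hsub2 hz)
      rw [Metric.mem_closedBall, dist_eq_norm]
      have h1 : z + (g z - gs j z) - ζ₀ = (z - ζ₀) + (g z - gs j z) := by ring
      rw [h1]
      have h2 : ‖z - ζ₀‖ ≤ δ' := by
        rw [← dist_eq_norm]; exact Metric.mem_closedBall.mp hz
      have h3 : η ≤ δ / 4 := min_le_left _ _
      calc ‖(z - ζ₀) + (g z - gs j z)‖ ≤ ‖z - ζ₀‖ + ‖g z - gs j z‖ := norm_add_le _ _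
        _ ≤ δ' + η := add_le_add h2 herr.le
        _ ≤ δ / 2 + δ / 4 := by simp only [hδ'_def]; linarith
        _ ≤ δ := by linarith
    -- the contraction map
    have hηδ' : Kr * (δ' + η) ≤ δ' := by
      have h1 : η * (2 * Kr) ≤ δ' * (1 - Kr) := by
        rw [← le_div_iff₀ (by positivity : (0:ℝ) < 2 * Kr)]
        exact min_le_right _ _
      nlinarith
    -- key facts about any fixed point of `gs j` in the small closed ball
    have hfixprop : ∀ j, J ≤ j → ∀ ζ' ∈ Metric.closedBall ζ₀ δ', gs j ζ' = ζ' →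
        (1 < ‖deriv (gs j) ζ'‖ ∧ dist ζ' ζ₀ * (1 - Kr) ≤ Kr * ‖g ζ' - gs j ζ'‖) := by
      intro j hj ζ' hζ' hfixζ'
      constructor
      · have h1 : c < ‖deriv g ζ'‖ := (hNprop ζ' (hsub2 hζ')).2.2.2.2
        have h2 := (hJ j hj).2 ζ' hζ'
        have h3 : η₃ ≤ (c - 1) / 2 := min_le_right _ _
        have h4 : ‖deriv g ζ'‖ - ‖deriv (gs j) ζ'‖ ≤ ‖deriv g ζ' - deriv (gs j) ζ'‖ :=
          norm_sub_norm_le _ _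
        linarith
      · -- quantitative bound
        have hgζ' : g ζ' ∈ Metric.closedBall ζ₀ δ := by
          have := hA j hj ζ' hζ'
          rwa [show ζ' + (g ζ' - gs j ζ') = g ζ' by rw [hfixζ']; ring] at this
        have hgs : g ζ' ∈ s := (hNprop _ hgζ').2.2.2.1
        have hsrc' : ζ' ∈ e.source := (hNprop ζ' (hsub2 hζ')).2.1
        have hsymmg : e.symm (g ζ') = ζ' := by
          rw [← heg]; exact e.left_inv hsrc'
        have h1 : dist (e.symm (g ζ')) (e.symm ζ₀) ≤ Kr * dist (g ζ') ζ₀ :=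
          hlip.dist_le_mul _ hgs _ hζ₀s
        rw [hsymmg, hsymmζ₀] at h1
        have h2 : dist (g ζ') ζ₀ ≤ ‖g ζ' - gs j ζ'‖ + dist ζ' ζ₀ := by
          calc dist (g ζ') ζ₀ ≤ dist (g ζ') ζ' + dist ζ' ζ₀ := dist_triangle _ _ _
            _ = ‖g ζ' - gs j ζ'‖ + dist ζ' ζ₀ := by
                rw [dist_eq_norm]
                nth_rewrite 2 [← hfixζ']
                rfl
        nlinarith [mul_le_mul_of_nonneg_left h2 hK0.le, dist_nonneg (x := ζ') (y := ζ₀)]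
    -- existence of a fixed point for each large `j`, via the Banach fixed point theorem
    have hexists : ∀ j, J ≤ j → ∃ z ∈ Metric.closedBall ζ₀ δ', gs j z = z := by
      intro j hj
      set T : ℂ → ℂ := fun z => e.symm (z + (g z - gs j z)) with hT_def
      -- `T` maps the small closed ball into itself
      have hsf : Set.MapsTo T (Metric.closedBall ζ₀ δ') (Metric.closedBall ζ₀ δ') := by
        intro z hz
        have hu := hA j hj z hz
        have hus : z + (g z - gs j z) ∈ s := (hNprop _ hu).2.2.2.1
        have h1 : dist (T z) ζ₀ ≤ Kr * dist (z + (g z - gs j z)) ζ₀ := by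
          have := hlip.dist_le_mul _ hus _ hζ₀s
          rwa [hsymmζ₀] at this
        rw [Metric.mem_closedBall]
        have h2 : dist (z + (g z - gs j z)) ζ₀ ≤ δ' + η := by
          rw [dist_eq_norm, show z + (g z - gs j z) - ζ₀ = (z - ζ₀) + (g z - gs j z) by ring]
          have h3 : ‖z - ζ₀‖ ≤ δ' := by rw [← dist_eq_norm]; exact Metric.mem_closedBall.mp hz
          calc ‖(z - ζ₀) + (g z - gs j z)‖ ≤ ‖z - ζ₀‖ + ‖g z - gs j z‖ := norm_add_le _ _
            _ ≤ δ' + η := add_le_add h3 ((hJ j hj).1 z (hsub2 hz)).le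
        calc dist (T z) ζ₀ ≤ Kr * dist (z + (g z - gs j z)) ζ₀ := h1
          _ ≤ Kr * (δ' + η) := mul_le_mul_of_nonneg_left h2 hK0.le
          _ ≤ δ' := hηδ'
      -- `T` is Lipschitz with constant `k < 1` on the small closed ball
      have hLip : ∀ z ∈ Metric.closedBall ζ₀ δ', ∀ w ∈ Metric.closedBall ζ₀ δ',
          dist (T z) (T w) ≤ k * dist z w := by
        intro z hz w hw
        have huz := hA j hj z hz
        have huw := hA j hj w hw
        have huzs : z + (g z - gs j z) ∈ s := (hNprop _ huz).2.2.2.1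
        have huws : w + (g w - gs j w) ∈ s := (hNprop _ huw).2.2.2.1
        have h1 : dist (T z) (T w) ≤ Kr * dist (z + (g z - gs j z)) (w + (g w - gs j w)) :=
          hlip.dist_le_mul _ huzs _ huws
        -- mean value estimate for the difference `g - gs j`
        have hmv : ‖(g z - gs j z) - (g w - gs j w)‖ ≤ η₂ * ‖z - w‖ := by
          have hballΩ : Metric.closedBall ζ₀ δ' ⊆ Ω := fun x hx => (hNprop x (hsub2 hx)).1
          have hd1 : ∀ x ∈ Metric.closedBall ζ₀ δ',
              HasDerivWithinAt (fun y => g y - gs j y)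
                (deriv g x - deriv (gs j) x) (Metric.closedBall ζ₀ δ') x := by
            intro x hx
            have hgx : DifferentiableAt ℂ g x :=
              (hg.differentiableAt (hΩ.mem_nhds (hballΩ hx)))
            have hgsx : DifferentiableAt ℂ (gs j) x :=
              ((hdiffs j).differentiableAt (hΩ.mem_nhds (hballΩ hx)))
            exact (hgx.hasDerivAt.sub hgsx.hasDerivAt).hasDerivWithinAt
          have hbound : ∀ x ∈ Metric.closedBall ζ₀ δ',
              ‖deriv g x - deriv (gs j) x‖ ≤ η₂ := by
            intro x hx
            exact le_trans ((hJ j hj).2 x hx).le (min_le_left _ _)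
          exact Convex.norm_image_sub_le_of_norm_hasDerivWithin_le hd1 hbound
            (convex_closedBall ζ₀ δ') hw hz
        have h2 : dist (z + (g z - gs j z)) (w + (g w - gs j w)) ≤ (1 + η₂) * dist z w := by
          rw [dist_eq_norm, show z + (g z - gs j z) - (w + (g w - gs j w))
            = (z - w) + ((g z - gs j z) - (g w - gs j w)) by ring]
          calc ‖(z - w) + ((g z - gs j z) - (g w - gs j w))‖
              ≤ ‖z - w‖ + ‖(g z - gs j z) - (g w - gs j w)‖ := norm_add_le _ _
            _ ≤ ‖z - w‖ + η₂ * ‖z - w‖ := add_le_add le_rfl hmv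
            _ = (1 + η₂) * ‖z - w‖ := by ring
            _ = (1 + η₂) * dist z w := by rw [dist_eq_norm]
        have hkeq : Kr * (1 + η₂) = k := by
          simp only [hη₂_def, hk_def]
          field_simp
          ring
        calc dist (T z) (T w) ≤ Kr * ((1 + η₂) * dist z w) :=
              h1.trans (mul_le_mul_of_nonneg_left h2 hK0.le)
          _ = k * dist z w := by rw [← mul_assoc, hkeq]
      -- apply the Banach fixed point theorem
      have hcontr : ContractingWith K' (hsf.restrict T _ _) := by
        constructor
        · rw [← NNReal.coe_lt_one]; exact hk1
        · apply LipschitzWith.of_dist_le_mul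
          rintro ⟨x, hx⟩ ⟨y, hy⟩
          exact hLip x hx y hy
      obtain ⟨ζ', hζ'mem, hfixT, -, -⟩ := hcontr.exists_fixedPoint'
        (Metric.isClosed_closedBall.isComplete) hsf
        (Metric.mem_closedBall_self hδ'.le) (edist_ne_top _ _)
      refine ⟨ζ', hζ'mem, ?_⟩
      -- translate `T ζ' = ζ'` into `gs j ζ' = ζ'`
      have hu := hA j hj ζ' hζ'mem
      have hut : ζ' + (g ζ' - gs j ζ') ∈ e.target := (hNprop _ hu).2.2.1
      have h1 : e (e.symm (ζ' + (g ζ' - gs j ζ'))) = ζ' + (g ζ' - gs j ζ') := e.right_inv hut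
      have h2 : T ζ' = ζ' := hfixT
      rw [hT_def] at h2
      simp only at h2
      rw [h2] at h1
      rw [heg] at h1
      -- `g ζ' = ζ' + (g ζ' - gs j ζ')`
      have : gs j ζ' = ζ' := by linear_combination h1
      exact this
    -- define the sequence of fixed points
    set Q : ℕ → Prop := fun j => ∃ z, z ∈ Metric.closedBall ζ₀ δ' ∧ gs j z = z with hQ_def
    have hQ : ∀ j, J ≤ j → Q j := by
      intro j hj
      obtain ⟨z, hz, hfz⟩ := hexists j hj
      exact ⟨z, hz, hfz⟩
    set ζfun : ℕ → ℂ := fun j => if h : Q j then h.choose else ζ₀ with hζfun_def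
    have hζprop : ∀ j, J ≤ j →
        ζfun j ∈ Metric.closedBall ζ₀ δ' ∧ gs j (ζfun j) = ζfun j := by
      intro j hj
      have h := hQ j hj
      simp only [hζfun_def, dif_pos h]
      exact h.choose_spec
    refine ⟨ζfun, J, fun j hj => ?_, ?_⟩
    · obtain ⟨hmem, hfz⟩ := hζprop j hj
      obtain ⟨hder1, -⟩ := hfixprop j hj _ hmem hfz
      exact ⟨hsub1 hmem, hfz, hder1⟩
    · -- convergence of the fixed points to `ζ₀`
      rw [Metric.tendsto_atTop]
      intro ρ hρ
      set ε : ℝ := ρ * (1 - Kr) / (2 * Kr) with hε_def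
      have hε : 0 < ε := by
        have : 0 < 1 - Kr := by linarith
        positivity
      have hEε := Metric.tendstoUniformlyOn_iff.mp hucc ε hε
      rw [eventually_atTop] at hEε
      obtain ⟨N, hNε⟩ := hEε
      refine ⟨max J N, fun j hj => ?_⟩
      have hjJ : J ≤ j := le_trans (le_max_left _ _) hj
      have hjN : N ≤ j := le_trans (le_max_right _ _) hj
      obtain ⟨hmem, hfz⟩ := hζprop j hjJ
      obtain ⟨-, hbd⟩ := hfixprop j hjJ _ hmem hfz
      have herr : ‖g (ζfun j) - gs j (ζfun j)‖ < ε := by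
        have := hNε j hjN (ζfun j) (hsub2 hmem)
        rwa [dist_eq_norm] at this
      have h1 : dist (ζfun j) ζ₀ * (1 - Kr) < Kr * ε :=
        lt_of_le_of_lt hbd (by
          exact mul_lt_mul_of_pos_left herr hK0)
      have h2 : Kr * ε = ρ * (1 - Kr) / 2 := by
        simp only [hε_def]
        field_simp
      rw [h2] at h1
      have h3 : 0 < 1 - Kr := by linarith
      nlinarith [dist_nonneg (x := ζfun j) (y := ζ₀)]
end

section
/- Fix p ∈ ℂ. The reparametrization ε = ε̂ − p·ε̂² together with x = (1 − p·ε̂)·x̂ transforms the family f_ε(x) = x + (x² + ε²)(1 + pε + O(|x| + |ε|²)) into a family f̂_ε̂(x̂) = x̂ + (x̂² + ε̂²)(1 + O(|x̂| + |ε̂|²)) with no linear term in ε̂; i.e. after the change of variables the coefficient of ε̂ in the analogue of α vanishes. -/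
open Filter Topology

set_option maxHeartbeats 1000000 in
/-- Normalization: for `f_ε(x) = x + (x² + ε²)α_ε(x)` with
`α_ε(x) = 1 + pε + (q+1)x + O(|x|² + |ε|²)`, the reparametrization `ε = ε̂ − pε̂²`
together with `x = (1 − pε̂)x̂` yields a family of the same form whose coefficient
function has no `ε̂`-linear term: `α̂_ε̂(x̂) = 1 + (q̂+1)x̂ + O(|x̂|² + |ε̂|²)`. -/
theorem stmt19 (p q : ℂ) (α : ℂ → ℂ → ℂ)
    (hα : AnalyticAt ℂ (fun w : ℂ × ℂ => α w.1 w.2) 0)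
    (C δ : ℝ) (hδ : 0 < δ)
    (hform : ∀ ε x : ℂ, ‖ε‖ < δ → ‖x‖ < δ →
      ‖α ε x - 1 - p * ε - (q + 1) * x‖ ≤ C * (‖x‖ ^ 2 + ‖ε‖ ^ 2))
    (f : ℂ → ℂ → ℂ) (hf : ∀ ε x, f ε x = x + (x ^ 2 + ε ^ 2) * α ε x) :
    ∃ (α' : ℂ → ℂ → ℂ) (q' : ℂ) (C' δ' : ℝ), 0 < δ' ∧
      ∀ ε' x' : ℂ, ‖ε'‖ < δ' → ‖x'‖ < δ' →
        (1 - p * ε') * (x' + (x' ^ 2 + ε' ^ 2) * α' ε' x') =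
          f (ε' - p * ε' ^ 2) ((1 - p * ε') * x') ∧
        ‖α' ε' x' - 1 - (q' + 1) * x'‖ ≤ C' * (‖x'‖ ^ 2 + ‖ε'‖ ^ 2) := by
  have hP0 : (0:ℝ) ≤ ‖p‖ := norm_nonneg _
  have hQ0 : (0:ℝ) ≤ ‖q + 1‖ := norm_nonneg _
  set P : ℝ := ‖p‖ with hP
  set Q : ℝ := ‖q + 1‖ with hQ
  set C₀ : ℝ := max C 0 with hC0
  have hC00 : 0 ≤ C₀ := le_max_right _ _
  have hCC : C ≤ C₀ := le_max_left _ _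
  refine ⟨fun ε x => (1 - p * ε) * α (ε - p * ε ^ 2) ((1 - p * ε) * x), q,
    2 * P ^ 2 + P ^ 3 + 2 * Q * P + Q * P ^ 2 + (1 + P) ^ 3 * C₀,
    min 1 (δ / (2 * (1 + P))), ?_, ?_⟩
  · exact lt_min one_pos (by positivity)
  intro ε x hε hx
  have hε1 : ‖ε‖ < 1 := lt_of_lt_of_le hε (min_le_left _ _)
  have hx1 : ‖x‖ < 1 := lt_of_lt_of_le hx (min_le_left _ _)
  have hε2 : ‖ε‖ < δ / (2 * (1 + P)) := lt_of_lt_of_le hε (min_le_right _ _)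
  have hx2 : ‖x‖ < δ / (2 * (1 + P)) := lt_of_lt_of_le hx (min_le_right _ _)
  have h1P : (0:ℝ) < 1 + P := by positivity
  have hee : ‖ε‖ ^ 2 ≤ ‖ε‖ := by nlinarith [norm_nonneg ε]
  -- bounds on transformed arguments
  have hεt : ‖ε - p * ε ^ 2‖ ≤ (1 + P) * ‖ε‖ := by
    calc ‖ε - p * ε ^ 2‖ ≤ ‖ε‖ + ‖p * ε ^ 2‖ := norm_sub_le _ _
      _ = ‖ε‖ + P * ‖ε‖ ^ 2 := by rw [norm_mul, norm_pow]
      _ ≤ ‖ε‖ + P * ‖ε‖ := by nlinarith [mul_le_mul_of_nonneg_left hee hP0]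
      _ = (1 + P) * ‖ε‖ := by ring
  have h1pe : ‖1 - p * ε‖ ≤ 1 + P := by
    calc ‖1 - p * ε‖ ≤ ‖(1:ℂ)‖ + ‖p * ε‖ := norm_sub_le _ _
      _ = 1 + P * ‖ε‖ := by rw [norm_one, norm_mul]
      _ ≤ 1 + P := by nlinarith [norm_nonneg ε]
  have hxt : ‖(1 - p * ε) * x‖ ≤ (1 + P) * ‖x‖ := by
    rw [norm_mul]
    exact mul_le_mul_of_nonneg_right h1pe (norm_nonneg x)
  have hhalf : (1 + P) * (δ / (2 * (1 + P))) = δ / 2 := by field_simp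
  have hεδ : ‖ε - p * ε ^ 2‖ < δ := by
    have := mul_lt_mul_of_pos_left hε2 h1P
    nlinarith [hεt]
  have hxδ : ‖(1 - p * ε) * x‖ < δ := by
    have := mul_lt_mul_of_pos_left hx2 h1P
    nlinarith [hxt]
  set εt : ℂ := ε - p * ε ^ 2 with hεtdef
  set xt : ℂ := (1 - p * ε) * x with hxtdef
  set R : ℂ := α εt xt - 1 - p * εt - (q + 1) * xt with hRdef
  have hR : ‖R‖ ≤ C * (‖xt‖ ^ 2 + ‖εt‖ ^ 2) := hform εt xt hεδ hxδ
  have hRb : ‖R‖ ≤ C₀ * ((1 + P) ^ 2 * (‖x‖ ^ 2 + ‖ε‖ ^ 2)) := by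
    have hxt2 : ‖xt‖ ^ 2 ≤ (1 + P) ^ 2 * ‖x‖ ^ 2 := by
      nlinarith [norm_nonneg xt, norm_nonneg x]
    have hεt2 : ‖εt‖ ^ 2 ≤ (1 + P) ^ 2 * ‖ε‖ ^ 2 := by
      nlinarith [norm_nonneg εt, norm_nonneg ε]
    calc ‖R‖ ≤ C * (‖xt‖ ^ 2 + ‖εt‖ ^ 2) := hR
      _ ≤ C₀ * (‖xt‖ ^ 2 + ‖εt‖ ^ 2) := by
          apply mul_le_mul_of_nonneg_right hCC; positivity
      _ ≤ C₀ * ((1 + P) ^ 2 * (‖x‖ ^ 2 + ‖ε‖ ^ 2)) := by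
          apply mul_le_mul_of_nonneg_left _ hC00; nlinarith
  constructor
  · rw [hf]; ring
  · have key : (1 - p * ε) * α εt xt - 1 - (q + 1) * x =
        (-2 * p ^ 2 * ε ^ 2 + p ^ 3 * ε ^ 3 - 2 * (q + 1) * p * ε * x
          + (q + 1) * p ^ 2 * ε ^ 2 * x) + (1 - p * ε) * R := by
      have hA : α εt xt = R + 1 + p * εt + (q + 1) * xt := by rw [hRdef]; ring
      rw [hA, hεtdef, hxtdef]; ring
    have t1 : ‖-2 * p ^ 2 * ε ^ 2‖ = 2 * P ^ 2 * ‖ε‖ ^ 2 := by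
      rw [norm_mul, norm_mul, norm_pow, norm_pow]
      norm_num [hP]
    have t2 : ‖p ^ 3 * ε ^ 3‖ = P ^ 3 * ‖ε‖ ^ 3 := by
      rw [norm_mul, norm_pow, norm_pow]
    have t3 : ‖2 * (q + 1) * p * ε * x‖ = 2 * Q * P * ‖ε‖ * ‖x‖ := by
      rw [norm_mul, norm_mul, norm_mul, norm_mul]
      norm_num [hP, hQ]
    have t4 : ‖(q + 1) * p ^ 2 * ε ^ 2 * x‖ = Q * P ^ 2 * ‖ε‖ ^ 2 * ‖x‖ := by
      rw [norm_mul, norm_mul, norm_mul, norm_pow, norm_pow]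
    have hnorm : ‖(1 - p * ε) * α εt xt - 1 - (q + 1) * x‖ ≤
        (2 * P ^ 2 * ‖ε‖ ^ 2 + P ^ 3 * ‖ε‖ ^ 3 + 2 * Q * P * ‖ε‖ * ‖x‖
          + Q * P ^ 2 * ‖ε‖ ^ 2 * ‖x‖) + (1 + P) * ‖R‖ := by
      rw [key]
      have s1 : ‖(-2 * p ^ 2 * ε ^ 2 + p ^ 3 * ε ^ 3 - 2 * (q + 1) * p * ε * x
            + (q + 1) * p ^ 2 * ε ^ 2 * x) + (1 - p * ε) * R‖
          ≤ ‖-2 * p ^ 2 * ε ^ 2 + p ^ 3 * ε ^ 3 - 2 * (q + 1) * p * ε * x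
            + (q + 1) * p ^ 2 * ε ^ 2 * x‖ + ‖(1 - p * ε) * R‖ := norm_add_le _ _
      have s2 : ‖-2 * p ^ 2 * ε ^ 2 + p ^ 3 * ε ^ 3 - 2 * (q + 1) * p * ε * x
            + (q + 1) * p ^ 2 * ε ^ 2 * x‖
          ≤ ‖-2 * p ^ 2 * ε ^ 2‖ + ‖p ^ 3 * ε ^ 3‖ + ‖2 * (q + 1) * p * ε * x‖
            + ‖(q + 1) * p ^ 2 * ε ^ 2 * x‖ := by
        refine (norm_add_le _ _).trans ?_
        gcongr
        refine (norm_sub_le _ _).trans ?_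
        gcongr
        exact norm_add_le _ _
      have s3 : ‖(1 - p * ε) * R‖ ≤ (1 + P) * ‖R‖ := by
        rw [norm_mul]
        exact mul_le_mul_of_nonneg_right h1pe (norm_nonneg R)
      rw [t1, t2, t3, t4] at s2
      linarith
    refine hnorm.trans ?_
    have he0 : 0 ≤ ‖ε‖ := norm_nonneg _
    have hx0 : 0 ≤ ‖x‖ := norm_nonneg _
    have hr0 : 0 ≤ ‖R‖ := norm_nonneg _
    have a1 : P ^ 3 * ‖ε‖ ^ 3 ≤ P ^ 3 * ‖ε‖ ^ 2 := by
      apply mul_le_mul_of_nonneg_left _ (by positivity)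
      nlinarith
    have a2 : Q * P ^ 2 * ‖ε‖ ^ 2 * ‖x‖ ≤ Q * P ^ 2 * ‖ε‖ ^ 2 := by
      nlinarith [mul_nonneg (mul_nonneg hQ0 (sq_nonneg P)) (sq_nonneg ‖ε‖)]
    have a3 : 2 * Q * P * ‖ε‖ * ‖x‖ ≤ Q * P * (‖ε‖ ^ 2 + ‖x‖ ^ 2) := by
      nlinarith [mul_nonneg hQ0 hP0, sq_nonneg (‖ε‖ - ‖x‖)]
    have a4 : (1 + P) * ‖R‖ ≤ (1 + P) ^ 3 * C₀ * (‖x‖ ^ 2 + ‖ε‖ ^ 2) := by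
      calc (1 + P) * ‖R‖ ≤ (1 + P) * (C₀ * ((1 + P) ^ 2 * (‖x‖ ^ 2 + ‖ε‖ ^ 2))) :=
            mul_le_mul_of_nonneg_left hRb (le_of_lt h1P)
        _ = (1 + P) ^ 3 * C₀ * (‖x‖ ^ 2 + ‖ε‖ ^ 2) := by ring
    have b1 : 0 ≤ 2 * P ^ 2 * ‖x‖ ^ 2 := by positivity
    have b2 : 0 ≤ P ^ 3 * ‖x‖ ^ 2 := by positivity
    have b3 : 0 ≤ Q * P ^ 2 * ‖x‖ ^ 2 := by positivity
    have b4 : 0 ≤ Q * P * (‖ε‖ ^ 2 + ‖x‖ ^ 2) := by positivity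
    nlinarith [a1, a2, a3, a4, b1, b2, b3, b4]
end
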